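/- Let G = (V, E) be a (not necessarily bipartite) graph in which each vertex v has a strict preference list over its neighbors, with every neighbor preferred to being unmatched. Construct the house allocation instance with one applicant a_v per vertex v ∈ V and one project p_e per edge e ∈ E with ℓ_{p_e} = u_{p_e} = 2, where the preference list of a_v ranks the projects p_{{v,u}} for neighbors u of v in the same order in which v ranks those neighbors. Then G admits a popular matching if and only if the constructed house allocation instance admits a popular matching; moreover, under the bijection sending a matching N of G to the matching M with M(a_u) = p_{{u,v}} = M(a_v) whenever N(u) = v, every vertex is matched to its i-th choice in N exactly when the corresponding applicant is matched to her i-th choice in M. -/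

import Mathlib

open scoped Classical

/-- A house allocation instance with lower and upper quotas: applicants `A`,
projects `P`, acceptability `acc`, ranks `rk` (lower rank = more preferred),
and lower/upper quotas `lq`, `uq` for each project. -/
structure HA (A P : Type) where
  acc : A → P → Prop
  rk : A → P → ℕ
  lq : P → ℕ
  uq : P → ℕ

namespace HA

variable {A P : Type} [Fintype A] [Fintype P]

/-- `I.Prefers a o₁ o₂` : applicant `a` strictly prefers assignment `o₁` to `o₂`
(`none` = being unmatched; every acceptable project is preferred to being unmatched). -/
def Prefers (I : HA A P) (a : A) : Option P → Option P → Prop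
  | some p, some q => I.acc a p ∧ I.acc a q ∧ I.rk a p < I.rk a q
  | some p, none => I.acc a p
  | none, _ => False

/-- The set of applicants assigned to project `p` by `M`. -/
noncomputable def assigned (M : A → Option P) (p : P) : Finset A :=
  Finset.univ.filter fun a => M a = some p

/-- `M` is a feasible matching: applicants are only assigned acceptable projects, and
every project is either closed (no assignees) or open with a number of assignees
between its lower and upper quota. -/
def IsMatching (I : HA A P) (M : A → Option P) : Prop :=
  (∀ a p, M a = some p → I.acc a p) ∧
  ∀ p : P, (assigned M p).card = 0 ∨
    (I.lq p ≤ (assigned M p).card ∧ (assigned M p).card ≤ I.uq p)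

/-- `M'` is more popular than `M`. -/
def MorePopular (I : HA A P) (M' M : A → Option P) : Prop :=
  (Finset.univ.filter fun a => I.Prefers a (M a) (M' a)).card <
  (Finset.univ.filter fun a => I.Prefers a (M' a) (M a)).card

/-- A popular matching. -/
def Popular (I : HA A P) (M : A → Option P) : Prop :=
  I.IsMatching M ∧ ∀ M', I.IsMatching M' → ¬ I.MorePopular M' M

/-- `M'` dominates `M`: no applicant is worse off and some applicant is better off. -/
def Dominates (I : HA A P) (M' M : A → Option P) : Prop :=
  (∀ a, ¬ I.Prefers a (M a) (M' a)) ∧ ∃ a, I.Prefers a (M' a) (M a)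

/-- A Pareto optimal matching. -/
def ParetoOptimal (I : HA A P) (M : A → Option P) : Prop :=
  I.IsMatching M ∧ ∀ M', I.IsMatching M' → ¬ I.Dominates M' M

/-- A perfect matching: every applicant is matched. -/
def Perfect (M : A → Option P) : Prop := ∀ a, M a ≠ none

/-- The weight of matching `M` w.r.t. integer edge weights `w`. -/
noncomputable def weight (w : A → P → ℤ) (M : A → Option P) : ℤ :=
  ∑ a, (M a).elim 0 (w a)

/-- Project `p` is open under `M`. -/
def OpenProj (M : A → Option P) (p : P) : Prop := ∃ a, M a = some p

/-- The number of projects opened by `M`. -/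
noncomputable def opensCount (M : A → Option P) : ℕ :=
  (Finset.univ.filter fun p => OpenProj M p).card

/-- The number of projects closed by `M`. -/
noncomputable def closesCount (M : A → Option P) : ℕ :=
  (Finset.univ.filter fun p => ¬ OpenProj M p).card

/-- The preferences of every applicant form a strict order on her acceptable projects. -/
def Strict (I : HA A P) : Prop :=
  ∀ a p q, I.acc a p → I.acc a q → I.rk a p = I.rk a q → p = q

end HA

section Graph

variable {V : Type} [Fintype V] [DecidableEq V]

/-- Vertex `v` strictly prefers assignment `o₁` to `o₂` in the roommates-style
instance on the graph `G` with ranks `rkG` (`none` = unmatched, every neighbor is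
preferred to being unmatched). -/
def GPrefers (G : SimpleGraph V) (rkG : V → V → ℕ) (v : V) :
    Option V → Option V → Prop
  | some u, some w => G.Adj v u ∧ G.Adj v w ∧ rkG v u < rkG v w
  | some u, none => G.Adj v u
  | none, _ => False

/-- A matching in the graph `G`, encoded by its partner function. -/
def GIsMatching (G : SimpleGraph V) (N : V → Option V) : Prop :=
  ∀ v u, N v = some u → G.Adj v u ∧ N u = some v

/-- `N'` is more popular than `N` in the graph instance. -/
def GMorePopular (G : SimpleGraph V) (rkG : V → V → ℕ) (N' N : V → Option V) : Prop :=
  (Finset.univ.filter fun v => GPrefers G rkG v (N v) (N' v)).card <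
  (Finset.univ.filter fun v => GPrefers G rkG v (N' v) (N v)).card

/-- A popular matching in the graph instance. -/
def GPopular (G : SimpleGraph V) (rkG : V → V → ℕ) (N : V → Option V) : Prop :=
  GIsMatching G N ∧ ∀ N', GIsMatching G N' → ¬ GMorePopular G rkG N' N

/-- The house allocation instance built from the graph `G`: one applicant per vertex,
one project (with lower and upper quota 2) per edge, an applicant `a_v` accepting
exactly the projects of edges incident to `v`, ranked as `v` ranks the corresponding
neighbors. -/
noncomputable def I9 (G : SimpleGraph V) (rkG : V → V → ℕ) :
    HA V {e : Sym2 V // e ∈ G.edgeSet} where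
  acc v e := ∃ u, G.Adj v u ∧ e.val = s(v, u)
  rk v e := Sym2.lift
    ⟨fun x y => max (if x = v then rkG v y else 0) (if y = v then rkG v x else 0),
      fun _ _ => max_comm _ _⟩ e.val
  lq _ := 2
  uq _ := 2

/-- The correspondence sending a matching of the graph to the matching of the house
allocation instance in which `a_u` and `a_v` are assigned to `p_{u,v}` whenever
`u` and `v` are matched to each other. -/
noncomputable def Phi (G : SimpleGraph V) (N : V → Option V) (v : V) :
    Option {e : Sym2 V // e ∈ G.edgeSet} :=
  (N v).bind fun u => if h : s(v, u) ∈ G.edgeSet then some ⟨s(v, u), h⟩ else none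

section AuxLemmas

variable (G : SimpleGraph V) (rkG : V → V → ℕ)

lemma acc_iff {v u : V} (h : s(v,u) ∈ G.edgeSet) :
    (I9 G rkG).acc v ⟨s(v,u), h⟩ ↔ G.Adj v u := by
  constructor
  · rintro ⟨w, hw, hs⟩
    simp only [I9] at hs
    rcases Sym2.eq_iff.mp hs with ⟨-, rfl⟩ | ⟨h1, -⟩
    · exact hw
    · exfalso; rw [h1] at hw; exact G.loopless.irrefl w hw
  · intro h'; exact ⟨u, h', rfl⟩

lemma rk_eq {v u : V} (h : s(v,u) ∈ G.edgeSet) :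
    (I9 G rkG).rk v ⟨s(v,u), h⟩ = rkG v u := by
  have hne : u ≠ v := by
    intro e; rw [e] at h; exact G.loopless.irrefl v (G.mem_edgeSet.mp h)
  simp [I9, hne]

lemma Phi_some {N : V → Option V} {v u : V} (hN : N v = some u) (h : G.Adj v u) :
    Phi G N v = some ⟨s(v,u), G.mem_edgeSet.mpr h⟩ := by
  simp [Phi, hN, SimpleGraph.mem_edgeSet, h]

lemma Phi_none {N : V → Option V} {v : V} (hN : N v = none) :
    Phi G N v = none := by simp [Phi, hN]

lemma Phi_eq_some_iff {N : V → Option V} (hN : GIsMatching G N) {v : V}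
    {p : {e : Sym2 V // e ∈ G.edgeSet}} :
    Phi G N v = some p ↔ ∃ u, N v = some u ∧ p.val = s(v,u) := by
  constructor
  · intro h
    rcases hv : N v with _ | u
    · rw [Phi_none G hv] at h; cases h
    · have hadj := (hN v u hv).1
      rw [Phi_some G hv hadj] at h
      exact ⟨u, rfl, by rw [← Option.some_inj.mp h]⟩
  · rintro ⟨u, hv, hp⟩
    have hadj := (hN v u hv).1
    rw [Phi_some G hv hadj]
    exact congrArg some (Subtype.ext hp.symm)

lemma isMatching_Phi {N : V → Option V} (hN : GIsMatching G N) :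
    (I9 G rkG).IsMatching (Phi G N) := by
  constructor
  · intro a p hp
    obtain ⟨u, hu, hpu⟩ := (Phi_eq_some_iff G hN).mp hp
    exact ⟨u, (hN a u hu).1, hpu⟩
  · rintro ⟨e, he⟩
    induction e using Sym2.ind with
    | _ x y =>
      have hxy : G.Adj x y := G.mem_edgeSet.mp he
      have hne : x ≠ y := G.ne_of_adj hxy
      have hmem : ∀ a : V, a ∈ HA.assigned (Phi G N) ⟨s(x,y), he⟩ ↔
          (a = x ∧ N x = some y) ∨ (a = y ∧ N y = some x) := by
        intro a
        simp only [HA.assigned, Finset.mem_filter, Finset.mem_univ, true_and]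
        rw [Phi_eq_some_iff G hN]
        constructor
        · rintro ⟨u, hu, hs⟩
          rcases Sym2.eq_iff.mp hs with ⟨hx, hy⟩ | ⟨hx, hy⟩
          · exact Or.inl ⟨hx.symm, by rw [hx, hy]; exact hu⟩
          · exact Or.inr ⟨hy.symm, by rw [hy, hx]; exact hu⟩
        · rintro (⟨rfl, hu⟩ | ⟨rfl, hu⟩)
          · exact ⟨y, hu, rfl⟩
          · exact ⟨x, hu, Sym2.eq_swap.symm⟩
      by_cases hx : N x = some y
      · right
        have hy : N y = some x := (hN x y hx).2
        have : HA.assigned (Phi G N) ⟨s(x,y), he⟩ = {x, y} := by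
          ext a
          rw [hmem a, Finset.mem_insert, Finset.mem_singleton]
          constructor
          · rintro (⟨rfl, -⟩ | ⟨rfl, -⟩) <;> simp
          · rintro (rfl | rfl)
            · exact Or.inl ⟨rfl, hx⟩
            · exact Or.inr ⟨rfl, hy⟩
        rw [this, Finset.card_insert_of_notMem (by simpa using hne),
          Finset.card_singleton]
        exact ⟨le_refl 2, le_refl 2⟩
      · left
        rw [Finset.card_eq_zero]
        ext a
        rw [hmem a]
        simp only [Finset.notMem_empty, iff_false]
        rintro (⟨-, hu⟩ | ⟨-, hu⟩)
        · exact hx hu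
        · exact hx (hN y x hu).2

lemma both_assigned {M : V → Option {e : Sym2 V // e ∈ G.edgeSet}}
    (hM : (I9 G rkG).IsMatching M) {x y : V} (he : s(x,y) ∈ G.edgeSet)
    (hx : M x = some ⟨s(x,y), he⟩) : M y = some ⟨s(x,y), he⟩ := by
  set p : {e : Sym2 V // e ∈ G.edgeSet} := ⟨s(x,y), he⟩ with hp
  have hne : x ≠ y := G.ne_of_adj (G.mem_edgeSet.mp he)
  have hsub : HA.assigned M p ⊆ {x, y} := by
    intro a ha
    simp only [HA.assigned, Finset.mem_filter] at ha
    obtain ⟨u, -, hu⟩ := hM.1 a p ha.2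
    have : a ∈ s(x,y) := by rw [show s(x,y) = p.val from rfl, hu]; exact Sym2.mem_mk_left a u
    rcases Sym2.mem_iff.mp this with rfl | rfl <;> simp
  have hxmem : x ∈ HA.assigned M p := by
    simp [HA.assigned, hx]
  have hcard2 : ({x, y} : Finset V).card = 2 := by
    rw [Finset.card_insert_of_notMem (by simpa using hne), Finset.card_singleton]
  have hge : 2 ≤ (HA.assigned M p).card := by
    rcases hM.2 p with h0 | ⟨hl, -⟩
    · exact absurd (Finset.card_eq_zero.mp h0) (by
        intro hcontra; rw [hcontra] at hxmem; exact absurd hxmem (Finset.notMem_empty x))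
    · exact hl
  have heq : HA.assigned M p = {x, y} :=
    Finset.eq_of_subset_of_card_le hsub (by omega)
  have : y ∈ HA.assigned M p := by rw [heq]; simp
  simpa [HA.assigned] using this

/-- The inverse correspondence. -/
noncomputable def Psi (M : V → Option {e : Sym2 V // e ∈ G.edgeSet}) (v : V) :
    Option V :=
  (M v).bind fun p => if h : v ∈ p.val then some (Sym2.Mem.other h) else none

lemma Psi_spec {M : V → Option {e : Sym2 V // e ∈ G.edgeSet}}
    (hM : (I9 G rkG).IsMatching M) {v : V} {p : {e : Sym2 V // e ∈ G.edgeSet}}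
    (hv : M v = some p) :
    ∃ u, Psi G M v = some u ∧ p.val = s(v,u) ∧ G.Adj v u := by
  obtain ⟨w, hadj, hpw⟩ := hM.1 v p hv
  have hmem : v ∈ p.val := by rw [hpw]; exact Sym2.mem_mk_left v w
  refine ⟨Sym2.Mem.other hmem, ?_, ?_, ?_⟩
  · simp [Psi, hv, hmem]
  · exact (Sym2.other_spec hmem).symm
  · exact G.mem_edgeSet.mp (by rw [Sym2.other_spec hmem]; exact p.2)

lemma Psi_none {M : V → Option {e : Sym2 V // e ∈ G.edgeSet}} {v : V}
    (hv : M v = none) : Psi G M v = none := by simp [Psi, hv]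

lemma gIsMatching_Psi {M : V → Option {e : Sym2 V // e ∈ G.edgeSet}}
    (hM : (I9 G rkG).IsMatching M) : GIsMatching G (Psi G M) := by
  intro v u hvu
  rcases hv : M v with _ | p
  · rw [Psi_none G hv] at hvu; cases hvu
  · obtain ⟨u', hu', hpu', hadj'⟩ := Psi_spec G rkG hM hv
    rw [hvu] at hu'
    obtain rfl : u = u' := Option.some_inj.mp hu'
    refine ⟨hadj', ?_⟩
    have he : s(v,u) ∈ G.edgeSet := G.mem_edgeSet.mpr hadj'
    have hvp : M v = some ⟨s(v,u), he⟩ := by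
      rw [hv]; exact congrArg some (Subtype.ext hpu')
    have hup : M u = some ⟨s(v,u), he⟩ := by
      have := both_assigned G rkG hM (x := v) (y := u) he hvp
      exact this
    obtain ⟨w, hw, hpw, hadjw⟩ := Psi_spec G rkG hM hup
    have : s(v,u) = s(u,w) := hpw
    rcases Sym2.eq_iff.mp this with ⟨h1, -⟩ | ⟨h1, -⟩
    · exfalso; rw [h1] at hadj'; exact G.loopless.irrefl u hadj'
    · rw [hw]; exact congrArg some h1.symm

lemma Phi_Psi {M : V → Option {e : Sym2 V // e ∈ G.edgeSet}}
    (hM : (I9 G rkG).IsMatching M) : Phi G (Psi G M) = M := by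
  funext v
  rcases hv : M v with _ | p
  · rw [Phi_none G (Psi_none G hv)]
  · obtain ⟨u, hu, hpu, hadj⟩ := Psi_spec G rkG hM hv
    rw [Phi_some G hu hadj]
    exact congrArg some (Subtype.ext hpu.symm)

lemma prefers_iff {N N' : V → Option V} (hN : GIsMatching G N)
    (hN' : GIsMatching G N') (v : V) :
    (I9 G rkG).Prefers v (Phi G N v) (Phi G N' v) ↔
      GPrefers G rkG v (N v) (N' v) := by
  rcases hv : N v with _ | u
  · rw [Phi_none G hv]
    simp [HA.Prefers, GPrefers]
  · have hadj := (hN v u hv).1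
    have he : s(v,u) ∈ G.edgeSet := G.mem_edgeSet.mpr hadj
    rw [Phi_some G hv hadj]
    rcases hv' : N' v with _ | w
    · rw [Phi_none G hv']
      simp only [HA.Prefers, GPrefers]
      rw [acc_iff]
    · have hadj' := (hN' v w hv').1
      have he' : s(v,w) ∈ G.edgeSet := G.mem_edgeSet.mpr hadj'
      rw [Phi_some G hv' hadj']
      simp only [HA.Prefers, GPrefers]
      rw [acc_iff, acc_iff, rk_eq, rk_eq]

lemma morePopular_iff {N N' : V → Option V} (hN : GIsMatching G N)
    (hN' : GIsMatching G N') :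
    (I9 G rkG).MorePopular (Phi G N') (Phi G N) ↔ GMorePopular G rkG N' N := by
  unfold HA.MorePopular GMorePopular
  rw [Finset.filter_congr (fun v _ => prefers_iff G rkG hN hN' v),
    Finset.filter_congr (fun v _ => prefers_iff G rkG hN' hN v)]

end AuxLemmas

/-- Theorem: the graph admits a popular matching iff the constructed house allocation
instance does; moreover, the correspondence maps matchings to matchings and preserves
the rank at which every matched agent is matched. -/
theorem stmt_9 (G : SimpleGraph V) (rkG : V → V → ℕ)
    (hstrict : ∀ v u w, G.Adj v u → G.Adj v w → rkG v u = rkG v w → u = w) :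
    ((∃ N, GPopular G rkG N) ↔ ∃ M, (I9 G rkG).Popular M) ∧
    (∀ N, GIsMatching G N → (I9 G rkG).IsMatching (Phi G N) ∧
      ∀ v u (h : s(v, u) ∈ G.edgeSet), N v = some u →
        (I9 G rkG).rk v ⟨s(v, u), h⟩ = rkG v u) := by
  constructor
  · constructor
    · rintro ⟨N, hN, hpop⟩
      refine ⟨Phi G N, isMatching_Phi G rkG hN, ?_⟩
      intro M' hM' hmp
      have hN' := gIsMatching_Psi G rkG hM'
      rw [← Phi_Psi G rkG hM'] at hmp
      exact hpop (Psi G M') hN' ((morePopular_iff G rkG hN hN').mp hmp)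
    · rintro ⟨M, hM, hpop⟩
      refine ⟨Psi G M, gIsMatching_Psi G rkG hM, ?_⟩
      intro N' hN' hmp
      have hNM := gIsMatching_Psi G rkG hM
      have := (morePopular_iff G rkG hNM hN').mpr hmp
      rw [Phi_Psi G rkG hM] at this
      exact hpop (Phi G N') (isMatching_Phi G rkG hN') this
  · intro N hN
    exact ⟨isMatching_Phi G rkG hN, fun v u h _ => rk_eq G rkG h⟩

end Graph
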